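/- arXiv:1304.3816 — 2 statements merged into one kernel-verified Lean document; each statement's English description precedes it below -/
import Mathlib

section
/- Suppose every online MA communication protocol P for the (n,n)-dense INDEX problem satisfies hcost(P)·vcost(P) = Ω(n). Then every online MA protocol P' for the (m,n)-sparse INDEX problem with hcost(P') ≥ log n satisfies hcost(P')·vcost(P')= Ω(m·log(n/m)). -/
/-- An online MA communication protocol for a two-party problem `F`.
Merlin (with private randomness `RM`) sends `help1` to Alice (depending only on
Alice's input) and `help2` to Bob (depending on both inputs); Alice then sends a
public-coin (`RA`) message to Bob, who outputs a bit.  Completeness and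
soundness errors are at most `1/3`. -/
structure OnlineMA (A B : Type) (F : A → B → Prop) where
  RM : Type
  RA : Type
  [fRM : Fintype RM]
  [fRA : Fintype RA]
  hcost : ℕ
  vcost : ℕ
  help1 : A → RM → List Bool
  help2 : A → B → RM → List Bool
  amsg : A → List Bool → RA → List Bool
  out : B → List Bool → List Bool → RA → Bool
  hcost_le : ∀ x y rM, (help1 x rM).length + (help2 x y rM).length + 1 ≤ hcost
  vcost_le : ∀ x h rA, (amsg x h rA).length ≤ vcost
  complete : ∀ x y, F x y →
    3 * (Finset.univ.filter fun p : RM × RA =>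
        out y (help2 x y p.1) (amsg x (help1 x p.1) p.2) p.2 = false).card
      ≤ Fintype.card (RM × RA)
  sound : ∀ x y, ¬ F x y → ∀ h1 h2 : List Bool,
    3 * (Finset.univ.filter fun rA : RA =>
        out y h2 (amsg x h1 rA) rA = true).card
      ≤ Fintype.card RA

attribute [instance] OnlineMA.fRM OnlineMA.fRA

namespace Stmt11Aux

def ofB : ℕ → (ℕ → Bool) → ℕ
  | 0, _ => 0
  | b+1, f => (f 0).toNat + 2 * ofB b (fun i => f (i+1))

lemma ofB_lt (b : ℕ) (f : ℕ → Bool) : ofB b f < 2^b := by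
  induction b generalizing f with
  | zero => simp [ofB]
  | succ b ih =>
    have := ih (fun i => f (i+1))
    simp only [ofB, pow_succ]
    cases f 0 <;> simp <;> omega

lemma ofB_congr (b : ℕ) (f g : ℕ → Bool) (h : ∀ i < b, f i = g i) :
    ofB b f = ofB b g := by
  induction b generalizing f g with
  | zero => rfl
  | succ b ih =>
    simp only [ofB, h 0 (Nat.succ_pos _)]
    congr 1
    exact congrArg _ (ih _ _ fun i hi => h (i+1) (by omega))

lemma ofB_inj (b : ℕ) (f g : ℕ → Bool) (h : ofB b f = ofB b g) :
    ∀ i < b, f i = g i := by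
  induction b generalizing f g with
  | zero => omega
  | succ b ih =>
    simp only [ofB] at h
    have h0 : f 0 = g 0 := by
      cases hf : f 0 <;> cases hg : g 0 <;> simp [hf, hg] at h ⊢ <;> omega
    rw [h0] at h
    have h2 : ofB b (fun i => f (i+1)) = ofB b (fun i => g (i+1)) := by omega
    intro i hi
    match i with
    | 0 => exact h0
    | i+1 => exact ih _ _ h2 i (by omega)

def toL (b : ℕ) (f : ℕ → Bool) : List Bool := (List.range b).map f

@[simp] lemma toL_length (b f) : (toL b f).length = b := by simp [toL]

lemma getD_toL_append (b : ℕ) (f : ℕ → Bool) (s : List Bool) {i : ℕ} (hi : i < b) :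
    ((toL b f ++ s).getD i false) = f i := by
  rw [List.getD_eq_getElem _ _ (by simp [toL]; omega)]
  rw [List.getElem_append_left (by simp [toL]; omega)]
  simp [toL]

lemma drop_toL_append (b : ℕ) (f : ℕ → Bool) (s : List Bool) :
    (toL b f ++ s).drop b = s := by
  have : (toL b f ++ s).drop (toL b f).length = s := List.drop_left
  simpa using this

abbrev Sp (m n : ℕ) := {x : Fin n → Bool //
  (Finset.univ.filter fun i => x i = true).card ≤ m}

/-! ### Reduction B : dense INDEX on `m*b` bits, `b = log2 (n/m)` -/

section B

variable {m n b : ℕ}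

def xe (x' : Fin (m*b) → Bool) (k : ℕ) : Bool :=
  if h : k < m*b then x' ⟨k, h⟩ else false

def blkval (b : ℕ) (x' : Fin (m*b) → Bool) (j : ℕ) : ℕ :=
  ofB b (fun i => xe x' (j*b + i))

def posn (b : ℕ) (x' : Fin (m*b) → Bool) (j : ℕ) : ℕ :=
  j * 2^b + blkval b x' j

lemma div_blk (ι : Fin (m*b)) : (ι : ℕ) / b < m := by
  have h : (ι : ℕ) < m * b := ι.2
  exact Nat.div_lt_of_lt_mul (by rw [Nat.mul_comm b m]; exact h)

lemma blk_lt (hn : m * 2^b ≤ n) {j v : ℕ} (hj : j < m) (hv : v < 2^b) :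
    j * 2^b + v < n := by
  have h1 : (j+1) * 2^b ≤ m * 2^b := Nat.mul_le_mul_right _ hj
  calc j * 2^b + v < (j+1) * 2^b := by ring_nf; omega
    _ ≤ n := le_trans h1 hn

lemma blk_div {j v : ℕ} (hv : v < 2^b) : (j * 2^b + v) / 2^b = j := by
  rw [mul_comm, Nat.mul_add_div (Nat.two_pow_pos b)]
  simp [Nat.div_eq_of_lt hv]

lemma blkval_lt (x' : Fin (m*b) → Bool) (j : ℕ) : blkval b x' j < 2^b :=
  ofB_lt _ _

lemma posn_lt (hn : m * 2^b ≤ n) {j : ℕ} (hj : j < m) (x' : Fin (m*b) → Bool) :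
    posn b x' j < n := blk_lt hn hj (ofB_lt _ _)

def encB (hn : m * 2^b ≤ n) (x' : Fin (m*b) → Bool) : Sp m n := by
  refine ⟨fun ι => decide (∃ j : Fin m, (ι : ℕ) = posn b x' j), ?_⟩
  refine le_trans (Finset.card_le_card_of_injOn (fun ι => (ι : ℕ) / 2^b)
    (t := Finset.range m) ?_ ?_) (by simp)
  · intro ι hι
    simp only [Finset.mem_coe, Finset.mem_filter, Finset.mem_univ, true_and,
      decide_eq_true_eq] at hι
    obtain ⟨j, hj⟩ := hι
    simp only [Finset.mem_coe, Finset.mem_range, hj, posn]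
    rw [blk_div (blkval_lt x' j)]
    exact j.2
  · intro ι1 h1 ι2 h2 h
    simp only [Finset.mem_coe, Finset.mem_filter, Finset.mem_univ, true_and,
      decide_eq_true_eq] at h1 h2
    obtain ⟨j1, hj1⟩ := h1
    obtain ⟨j2, hj2⟩ := h2
    dsimp only at h
    rw [hj1, hj2, posn, posn, blk_div (blkval_lt x' j1), blk_div (blkval_lt x' j2)] at h
    apply Fin.val_injective
    rw [hj1, hj2, h]

def QB (hb : 0 < b) (hn : m * 2^b ≤ n)
    (P' : OnlineMA (Sp m n) (Fin n) (fun x ι => x.1 ι = true)) :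
    OnlineMA (Fin (m*b) → Bool) (Fin (m*b)) (fun x ι => x ι = true) where
  RM := P'.RM
  RA := P'.RA
  hcost := P'.hcost + b
  vcost := P'.vcost
  help1 x rM := P'.help1 (encB hn x) rM
  help2 x ι rM :=
    toL b (fun i => xe x ((ι : ℕ)/b*b + i)) ++
      P'.help2 (encB hn x) ⟨posn b x ((ι : ℕ)/b), posn_lt hn (div_blk ι) x⟩ rM
  amsg x h rA := P'.amsg (encB hn x) h rA
  out ι h2 msg rA :=
    h2.getD ((ι : ℕ) % b) false &&
      P'.out ⟨(ι : ℕ)/b * 2^b + ofB b (fun k => h2.getD k false),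
          blk_lt hn (div_blk ι) (ofB_lt _ _)⟩ (h2.drop b) msg rA
  hcost_le x y rM := by
    have := P'.hcost_le (encB hn x)
      ⟨posn b x ((y : ℕ)/b), posn_lt hn (div_blk y) x⟩ rM
    simp only [List.length_append, toL_length]
    omega
  vcost_le x h rA := P'.vcost_le _ _ _
  complete := by
    intro x ι hF
    have hj : (ι : ℕ)/b < m := div_blk ι
    have hib : (ι : ℕ) % b < b := Nat.mod_lt _ hb
    have hkey : (ι : ℕ)/b * b + (ι : ℕ) % b = (ι : ℕ) := by
      rw [mul_comm]; exact Nat.div_add_mod _ _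
    have hmem : (encB hn x).1 ⟨posn b x ((ι : ℕ)/b), posn_lt hn hj x⟩ = true := by
      simp only [encB, decide_eq_true_eq]
      exact ⟨⟨(ι : ℕ)/b, hj⟩, rfl⟩
    have hP := P'.complete (encB hn x) ⟨posn b x ((ι : ℕ)/b), posn_lt hn hj x⟩ hmem
    refine le_trans (Nat.mul_le_mul_left 3 (Finset.card_le_card ?_)) hP
    intro p hp
    simp only [Finset.mem_filter, Finset.mem_univ, true_and] at hp ⊢
    set f : ℕ → Bool := fun i => xe x ((ι : ℕ)/b*b + i) with hfdef
    set s : List Bool :=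
      P'.help2 (encB hn x) ⟨posn b x ((ι : ℕ)/b), posn_lt hn (div_blk ι) x⟩ p.1
      with hsdef
    have e1 : (toL b f ++ s).getD ((ι : ℕ) % b) false = true := by
      rw [getD_toL_append b f s hib]
      show xe x ((ι : ℕ)/b*b + (ι : ℕ) % b) = true
      rw [hkey]
      simp only [xe, ι.2, dif_pos]
      simpa using hF
    have e2 : (toL b f ++ s).drop b = s := drop_toL_append _ _ _
    have e3 : (ι : ℕ)/b * 2^b + ofB b (fun k => (toL b f ++ s).getD k false)
        = posn b x ((ι : ℕ)/b) := by
      rw [posn]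
      congr 1
      exact ofB_congr _ _ _ fun i hi => getD_toL_append b f _ hi
    rw [e1, Bool.true_and, e2] at hp
    simp only [e3] at hp
    exact hp
  sound := by
    intro x ι hF h1 h2
    have hj : (ι : ℕ)/b < m := div_blk ι
    have hib : (ι : ℕ) % b < b := Nat.mod_lt _ hb
    have hkey : (ι : ℕ)/b * b + (ι : ℕ) % b = (ι : ℕ) := by
      rw [mul_comm]; exact Nat.div_add_mod _ _
    by_cases hgi : h2.getD ((ι : ℕ) % b) false = true
    · have hnot : ¬ (encB hn x).1
          ⟨(ι : ℕ)/b * 2^b + ofB b (fun k => h2.getD k false),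
            blk_lt hn hj (ofB_lt _ _)⟩ = true := by
        simp only [encB, decide_eq_true_eq, not_exists]
        rintro ⟨j2, hj2⟩ heq
        simp only [posn] at heq
        have hd1 : ((ι : ℕ)/b * 2^b + ofB b (fun k => h2.getD k false)) / 2^b
            = (ι : ℕ)/b := blk_div (ofB_lt _ _)
        have hd2 : ((j2 : ℕ) * 2^b + blkval b x j2) / 2^b = j2 :=
          blk_div (blkval_lt x j2)
        rw [heq, hd2] at hd1
        rw [hd1] at heq
        have hveq : ofB b (fun k => h2.getD k false)
            = ofB b (fun i => xe x ((ι : ℕ)/b*b + i)) := by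
          have : blkval b x ((ι : ℕ)/b)
              = ofB b (fun i => xe x ((ι : ℕ)/b*b + i)) := rfl
          omega
        have hbit := ofB_inj b _ _ hveq ((ι : ℕ) % b) hib
        rw [hgi] at hbit
        rw [hkey] at hbit
        simp only [xe, ι.2, dif_pos] at hbit
        exact hF hbit.symm
      have hP := P'.sound (encB hn x)
        ⟨(ι : ℕ)/b * 2^b + ofB b (fun k => h2.getD k false),
          blk_lt hn hj (ofB_lt _ _)⟩ hnot h1 (h2.drop b)
      refine le_trans (Nat.mul_le_mul_left 3 (Finset.card_le_card ?_)) hP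
      intro rA hrA
      simp only [Finset.mem_filter, Finset.mem_univ, true_and] at hrA ⊢
      rw [hgi, Bool.true_and] at hrA
      exact hrA
    · refine le_trans (Nat.mul_le_mul_left 3
        (le_of_eq (Finset.card_eq_zero.mpr ?_))) (by simp)
      rw [Finset.filter_eq_empty_iff]
      intro rA _
      simp only [Bool.not_eq_true] at hgi ⊢
      rw [hgi, Bool.false_and]

end B


/-! ### Reduction A : dense INDEX on `m` bits reduces to `(m,n)`-sparse INDEX -/

def encA {m n : ℕ} (hmn : m ≤ n) (x' : Fin m → Bool) : Sp m n := by
  refine ⟨fun ι => if h : (ι : ℕ) < m then x' ⟨ι, h⟩ else false, ?_⟩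
  refine le_trans (Finset.card_le_card_of_injOn (fun ι => (ι : ℕ))
    (t := Finset.range m) ?_ ?_) (by simp)
  · intro ι hι
    simp only [Finset.mem_filter, Finset.mem_univ, true_and] at hι
    by_cases h : (ι : ℕ) < m
    · simpa using h
    · simp [h] at hι
  · intro a _ b _ h
    exact Fin.val_injective h

lemma encA_apply {m n : ℕ} (hmn : m ≤ n) (x' : Fin m → Bool) (ι : Fin m) :
    (encA hmn x').1 (Fin.castLE hmn ι) = x' ι := by
  simp [encA, Fin.castLE]

def QA {m n : ℕ} (hmn : m ≤ n)
    (P' : OnlineMA (Sp m n) (Fin n) (fun x ι => x.1 ι = true)) :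
    OnlineMA (Fin m → Bool) (Fin m) (fun x ι => x ι = true) where
  RM := P'.RM
  RA := P'.RA
  hcost := P'.hcost
  vcost := P'.vcost
  help1 x rM := P'.help1 (encA hmn x) rM
  help2 x ι rM := P'.help2 (encA hmn x) (Fin.castLE hmn ι) rM
  amsg x h rA := P'.amsg (encA hmn x) h rA
  out ι h2 msg rA := P'.out (Fin.castLE hmn ι) h2 msg rA
  hcost_le x y rM := P'.hcost_le _ _ _
  vcost_le x h rA := P'.vcost_le _ _ _
  complete x ι hF := P'.complete _ _ (by rw [encA_apply]; exact hF)
  sound x ι hF h1 h2 := P'.sound _ _ (by rw [encA_apply]; exact hF) h1 h2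

end Stmt11Aux

/-- Reduction from dense to sparse INDEX: if every online MA protocol for the
dense INDEX problem on `n'` bits has `hcost·vcost = Ω(n')`, then every online MA
protocol for the `(m,n)`-sparse INDEX problem with `hcost ≥ log n` has
`hcost·vcost = Ω(m·log(n/m))`. -/
theorem stmt_11
    (hdense : ∃ c : ℝ, 0 < c ∧ ∀ n : ℕ, 0 < n →
      ∀ P : OnlineMA (Fin n → Bool) (Fin n) (fun x ι => x ι = true),
        c * n ≤ (P.hcost : ℝ) * P.vcost) :
    ∃ c' : ℝ, 0 < c' ∧ ∀ m n : ℕ, 0 < m → m ≤ n →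
      ∀ P' : OnlineMA {x : Fin n → Bool //
            (Finset.univ.filter fun i => x i = true).card ≤ m}
          (Fin n) (fun x ι => x.1 ι = true),
        Real.logb 2 n ≤ (P'.hcost : ℝ) →
        c' * (m * Real.logb 2 ((n : ℝ) / m)) ≤ (P'.hcost : ℝ) * P'.vcost := by
  classical
  obtain ⟨c, hc, H⟩ := hdense
  refine ⟨c/4, by positivity, ?_⟩
  intro m n hm hmn P' hlog
  have hn0 : 0 < n := lt_of_lt_of_le hm hmn
  have hdiv : 0 < n / m := Nat.div_pos hmn hm
  set b := Nat.log 2 (n / m) with hbdef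
  have h2b : 2^b ≤ n / m := Nat.pow_log_le_self 2 hdiv.ne'
  have h2bn : 2^b ≤ n := le_trans h2b (Nat.div_le_self n m)
  have hmR : (0:ℝ) < m := by exact_mod_cast hm
  -- upper bound on logb 2 (n/m)
  have hltnat : n / m < 2^(b+1) := Nat.lt_pow_succ_log_self (by norm_num) (n / m)
  have hnub : n < m * 2^(b+1) := by
    have h2 := Nat.div_add_mod n m
    have h3 := Nat.mod_lt n hm
    have h4 : n / m + 1 ≤ 2^(b+1) := hltnat
    calc n < m * (n / m) + m := by omega
      _ = m * (n / m + 1) := by ring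
      _ ≤ m * 2^(b+1) := Nat.mul_le_mul_left _ h4
  have hlogb_ub : Real.logb 2 ((n:ℝ)/m) ≤ (b:ℝ) + 1 := by
    have h5 : (n:ℝ)/m ≤ (2:ℝ)^(b+1) := by
      rw [div_le_iff₀ hmR]
      calc (n:ℝ) ≤ (m * 2^(b+1) : ℕ) := by exact_mod_cast hnub.le
        _ = (2:ℝ)^(b+1) * m := by push_cast; ring
    calc Real.logb 2 ((n:ℝ)/m) ≤ Real.logb 2 ((2:ℝ)^(b+1)) :=
          Real.logb_le_logb_of_le (by norm_num) (by positivity) h5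
      _ = (b:ℝ) + 1 := by
          rw [Real.logb_pow]; simp [Real.logb_self_eq_one]
  -- b ≤ hcost
  have hbh : (b:ℝ) ≤ (P'.hcost : ℝ) := by
    have h5 : ((2:ℝ))^b ≤ (n:ℝ) := by exact_mod_cast h2bn
    have h6 : (b:ℝ) = Real.logb 2 ((2:ℝ)^b) := by
      rw [Real.logb_pow]; simp [Real.logb_self_eq_one]
    calc (b:ℝ) = Real.logb 2 ((2:ℝ)^b) := h6
      _ ≤ Real.logb 2 (n:ℝ) :=
          Real.logb_le_logb_of_le (by norm_num) (by positivity) h5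
      _ ≤ (P'.hcost : ℝ) := hlog
  -- reduction A
  have hA : c * (m:ℝ) ≤ (P'.hcost : ℝ) * P'.vcost := H m hm (Stmt11Aux.QA hmn P')
  have hv0 : (0:ℝ) ≤ P'.vcost := by positivity
  rcases Nat.eq_zero_or_pos b with hb0 | hb
  · -- b = 0 : n < 2m, use reduction A directly
    rw [hb0] at hlogb_ub
    have t1 := mul_le_mul_of_nonneg_left hlogb_ub
      (show (0:ℝ) ≤ c/4 * m by positivity)
    have t0 : (0:ℝ) ≤ c * m := by positivity
    push_cast at t1
    nlinarith [t1, hA, t0]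
  · -- b ≥ 1 : use reduction B
    have hm2b : m * 2^b ≤ n := le_trans (Nat.mul_le_mul_left m h2b) (Nat.mul_div_le n m)
    have hB : c * ((m*b : ℕ) : ℝ) ≤ ((P'.hcost + b : ℕ) : ℝ) * ((P'.vcost : ℕ) : ℝ) :=
      H (m*b) (Nat.mul_pos hm hb) (Stmt11Aux.QB hb hm2b P')
    push_cast at hB
    have hbR : (1:ℝ) ≤ b := by exact_mod_cast hb
    have t1 := mul_le_mul_of_nonneg_left hlogb_ub
      (show (0:ℝ) ≤ c/4 * m by positivity)
    have t2 := mul_le_mul_of_nonneg_left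
      (show ((b:ℝ)+1) ≤ 2*b by linarith)
      (show (0:ℝ) ≤ c/4 * m by positivity)
    have t3 := mul_le_mul_of_nonneg_right
      (show (P'.hcost:ℝ) + b ≤ 2 * P'.hcost by linarith) hv0
    nlinarith [t1, t2, t3, hB]
end

section
/- Let P(α,β) = Σ_{(b,j)} α^{n(b·log n + j)} β^{n(b·log n + j)} Σ_{(ℓ,ℓ'): ℓ_j=0, ℓ'_j=1} f_ℓ(b) f_{ℓ'}(b) α^ℓ β^{ℓ'} be the formal polynomial over 𝔽_q arising from the fingerprinted injection test, where f_ℓ(b) ∈ 𝔽_q, b ∈ [r], j ∈ [log n], ℓ, ℓ' ∈ [n] (with n(b·log n + j) + ℓ < n(b·log n + j + 1) for ℓ < n). Then the monomial α^{n(b·log n+j)+ℓ} β^{n(b·log n+j)+ℓ'} has coefficient f_ℓ(b)·f_{ℓ'}(b) when ℓ_j = 0 and ℓ'_j = 1 (and 0 otherwise); in particular, distinct tuples (b,j,ℓ,ℓ') with ℓ_j=0, ℓ'_j=1 contribute to distinct monomials, and P is the zero polynomial if and only if f_ℓ(b)·f_{ℓ'}(b)=0 for all such tuples. -/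
open MvPolynomial

private lemma div_unique' {n m m' a a' : ℕ} (ha : a < n) (ha' : a' < n)
    (h : n * m + a = n * m' + a') : m = m' ∧ a = a' := by
  have hn : 0 < n := Nat.pos_of_ne_zero (by rintro rfl; omega)
  have h1 : (n * m + a) / n = m := by rw [Nat.mul_add_div hn, Nat.div_eq_of_lt ha]; omega
  have h2 : (n * m' + a') / n = m' := by rw [Nat.mul_add_div hn, Nat.div_eq_of_lt ha']; omega
  have hm : m = m' := by rw [← h1, ← h2, h]
  subst hm
  exact ⟨rfl, by omega⟩

private lemma coeff_term {F : Type*} [Field F] (c : F) (a b a' b' : ℕ) :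
    MvPolynomial.coeff (Finsupp.single 0 a + Finsupp.single 1 b)
      (C c * X (0 : Fin 2) ^ a' * X (1 : Fin 2) ^ b') =
    if a = a' ∧ b = b' then c else 0 := by
  have hmon : C c * X (0 : Fin 2) ^ a' * X (1 : Fin 2) ^ b'
      = monomial (Finsupp.single 0 a' + Finsupp.single 1 b') c := by
    rw [X_pow_eq_monomial, X_pow_eq_monomial, C_mul_monomial, monomial_mul]
    simp
  rw [hmon, coeff_monomial]
  have hiff : (Finsupp.single (0 : Fin 2) a' + Finsupp.single 1 b'
      = Finsupp.single 0 a + Finsupp.single 1 b) ↔ (a = a' ∧ b = b') := by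
    constructor
    · intro h
      have h0 := congrFun (congrArg (↑·) h) 0
      have h1 := congrFun (congrArg (↑·) h) 1
      simp [Finsupp.single_apply] at h0 h1
      exact ⟨h0.symm, h1.symm⟩
    · rintro ⟨rfl, rfl⟩; rfl
  split_ifs with h1 h2 h2
  · rfl
  · exact absurd (hiff.mp h1) h2
  · exact absurd (hiff.mpr h2) h1
  · rfl

/-- No-cancellation in the fingerprinted injection polynomial: in
`P(α,β) = ∑_{b,j,ℓ,ℓ' : ℓ_j=0, ℓ'_j=1} f_ℓ(b)·f_{ℓ'}(b)·α^{n(bL+j)+ℓ}·β^{n(bL+j)+ℓ'}`,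
the monomial `α^{n(bL+j)+ℓ} β^{n(bL+j)+ℓ'}` has coefficient `f_ℓ(b)·f_{ℓ'}(b)`
when `ℓ_j = 0` and `ℓ'_j = 1` (and `0` otherwise), and `P = 0` iff all these
products vanish. -/
theorem stmt_16 (F : Type*) [Field F] (r L n : ℕ)
    (f : Fin n → Fin r → F)
    (P : MvPolynomial (Fin 2) F)
    (hP : P = ∑ b : Fin r, ∑ j : Fin L, ∑ ℓ : Fin n, ∑ ℓ' : Fin n,
      if Nat.testBit (ℓ : ℕ) j = false ∧ Nat.testBit (ℓ' : ℕ) j = true then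
        MvPolynomial.C (f ℓ b * f ℓ' b) *
          X 0 ^ (n * ((b : ℕ) * L + (j : ℕ)) + (ℓ : ℕ)) *
          X 1 ^ (n * ((b : ℕ) * L + (j : ℕ)) + (ℓ' : ℕ))
      else 0) :
    (∀ (b : Fin r) (j : Fin L) (ℓ ℓ' : Fin n),
      MvPolynomial.coeff
        (Finsupp.single 0 (n * ((b : ℕ) * L + (j : ℕ)) + (ℓ : ℕ)) +
         Finsupp.single 1 (n * ((b : ℕ) * L + (j : ℕ)) + (ℓ' : ℕ))) P =
      if Nat.testBit (ℓ : ℕ) j = false ∧ Nat.testBit (ℓ' : ℕ) j = true then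
        f ℓ b * f ℓ' b
      else 0) ∧
    (P = 0 ↔ ∀ (b : Fin r) (j : Fin L) (ℓ ℓ' : Fin n),
      Nat.testBit (ℓ : ℕ) j = false → Nat.testBit (ℓ' : ℕ) j = true →
      f ℓ b * f ℓ' b = 0) := by
  have key : ∀ (b : Fin r) (j : Fin L) (ℓ ℓ' : Fin n),
      MvPolynomial.coeff
        (Finsupp.single 0 (n * ((b : ℕ) * L + (j : ℕ)) + (ℓ : ℕ)) +
         Finsupp.single 1 (n * ((b : ℕ) * L + (j : ℕ)) + (ℓ' : ℕ))) P =
      if Nat.testBit (ℓ : ℕ) j = false ∧ Nat.testBit (ℓ' : ℕ) j = true then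
        f ℓ b * f ℓ' b
      else 0 := by
    intro b j ℓ ℓ'
    subst hP
    rw [MvPolynomial.coeff_sum]
    simp only [MvPolynomial.coeff_sum]
    rw [Finset.sum_eq_single b, Finset.sum_eq_single j, Finset.sum_eq_single ℓ,
        Finset.sum_eq_single ℓ']
    · rw [apply_ite (MvPolynomial.coeff _), coeff_term, coeff_zero]
      simp
    -- off-diagonal ℓ''
    · intro ℓ'' _ hne
      rw [apply_ite (MvPolynomial.coeff _), coeff_term, coeff_zero]
      split_ifs with hc1 hc2 <;> try rfl
      exact absurd (Fin.ext (Nat.add_left_cancel hc2.2).symm) hne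
    · intro h; exact absurd (Finset.mem_univ _) h
    · intro ℓ'' _ hne
      apply Finset.sum_eq_zero
      intro ℓ''' _
      rw [apply_ite (MvPolynomial.coeff _), coeff_term, coeff_zero]
      split_ifs with hc1 hc2 <;> try rfl
      exact absurd (Fin.ext (Nat.add_left_cancel hc2.1).symm) hne
    · intro h; exact absurd (Finset.mem_univ _) h
    · intro j' _ hne
      apply Finset.sum_eq_zero; intro ℓ'' _
      apply Finset.sum_eq_zero; intro ℓ''' _
      rw [apply_ite (MvPolynomial.coeff _), coeff_term, coeff_zero]
      split_ifs with hc1 hc2 <;> try rfl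
      have hm := (div_unique' ℓ.isLt ℓ''.isLt hc2.1).1
      exact absurd (Fin.ext (Nat.add_left_cancel hm).symm) hne
    · intro h; exact absurd (Finset.mem_univ _) h
    · intro b' _ hne
      apply Finset.sum_eq_zero; intro j' _
      apply Finset.sum_eq_zero; intro ℓ'' _
      apply Finset.sum_eq_zero; intro ℓ''' _
      rw [apply_ite (MvPolynomial.coeff _), coeff_term, coeff_zero]
      split_ifs with hc1 hc2 <;> try rfl
      have hm := (div_unique' ℓ.isLt ℓ''.isLt hc2.1).1
      have hm' : L * (b : ℕ) + (j : ℕ) = L * (b' : ℕ) + (j' : ℕ) := by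
        rw [Nat.mul_comm L, Nat.mul_comm L]; exact hm
      exact absurd (Fin.ext (div_unique' j.isLt j'.isLt hm').1).symm hne
    · intro h; exact absurd (Finset.mem_univ _) h
  refine ⟨key, ?_, ?_⟩
  · intro h0 b j ℓ ℓ' h1 h2
    have hk := key b j ℓ ℓ'
    rw [h0] at hk
    simpa [h1, h2] using hk.symm
  · intro hv
    rw [hP]
    apply Finset.sum_eq_zero; intro b _
    apply Finset.sum_eq_zero; intro j _
    apply Finset.sum_eq_zero; intro ℓ _
    apply Finset.sum_eq_zero; intro ℓ' _
    split_ifs with h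
    · rw [hv b j ℓ ℓ' h.1 h.2]; simp
    · rfl
end
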